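/- Let A be a commutative ring, M a group, B an A-algebra that is free as an A-module, and V, W modules over the group algebra A[M]. If V is finitely generated as an A[M]-module, then the natural B-module map Hom_{A[M]}(V, W) ⊗_A B → Hom_{B[M]}(V ⊗_A B, W ⊗_A B), sending φ ⊗ b to the B[M]-linear map determined by v ⊗ b′ ↦ φ(v) ⊗ b·b′, is bijective. -/

import Mathlib

open TensorProduct

section

variable {A : Type*} [CommRing A] {M : Type*} [Group M]
variable {B : Type*} [CommRing B] [Algebra A B]
variable {V : Type*} [AddCommGroup V] [Module A V] [Module (MonoidAlgebra A M) V]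
  [IsScalarTower A (MonoidAlgebra A M) V]

/-- The action of `m : M` on an `A[M]`-module as an `A`-linear endomorphism. -/
noncomputable def mAct (m : M) : V →ₗ[A] V where
  toFun v := MonoidAlgebra.of A M m • v
  map_add' _ _ := smul_add _ _ _
  map_smul' a v := smul_comm (MonoidAlgebra.of A M m) a v

lemma mAct_one : mAct (A := A) (M := M) (V := V) 1 = LinearMap.id := by
  ext v
  show MonoidAlgebra.of A M 1 • v = v
  rw [map_one, one_smul]

lemma mAct_mul (m n : M) :
    mAct (A := A) (M := M) (V := V) (m * n)
      = (mAct (A := A) (V := V) m) ∘ₗ (mAct (A := A) (V := V) n) := by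
  ext v
  show MonoidAlgebra.of A M (m * n) • v = MonoidAlgebra.of A M m • (MonoidAlgebra.of A M n • v)
  rw [map_mul, mul_smul]

/-- The base change to `B` of the `M`-action on `V`: the representation of `M` on
`V ⊗_A B = B ⊗[A] V` by `B`-linear endomorphisms, where `M` acts on the factor `V`. -/
noncomputable def bcRep : M →* Module.End B (B ⊗[A] V) where
  toFun m := LinearMap.baseChange B (mAct (A := A) (M := M) (V := V) m)
  map_one' := by
    show LinearMap.baseChange B (mAct (A := A) (M := M) (V := V) 1) = 1
    rw [mAct_one]
    exact LinearMap.baseChange_id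
  map_mul' m n := by
    show LinearMap.baseChange B (mAct (A := A) (M := M) (V := V) (m * n)) = _
    rw [mAct_mul]
    exact LinearMap.baseChange_comp _ _

/-- The `B[M]`-module structure on `V ⊗_A B = B ⊗[A] V` obtained by base change from
the `A[M]`-module `V`: `M` acts on the tensor factor `V` and `B` on the tensor
factor `B`. -/
noncomputable instance bcModule : Module (MonoidAlgebra B M) (B ⊗[A] V) :=
  Module.compHom (B ⊗[A] V)
    ((MonoidAlgebra.lift B (Module.End B (B ⊗[A] V)) M)
      (bcRep (A := A) (M := M) (B := B) (V := V))).toRingHom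

lemma bc_smul_def (s : MonoidAlgebra B M) (y : B ⊗[A] V) :
    s • y = ((MonoidAlgebra.lift B (Module.End B (B ⊗[A] V)) M)
      (bcRep (A := A) (M := M) (B := B) (V := V)) s) y := rfl

variable {W : Type*} [AddCommGroup W] [Module A W] [Module (MonoidAlgebra A M) W]
  [IsScalarTower A (MonoidAlgebra A M) W]

lemma restrict_comm (φ : V →ₗ[MonoidAlgebra A M] W) (m : M) :
    (LinearMap.restrictScalars A φ) ∘ₗ (mAct (A := A) (V := V) m)
      = (mAct (A := A) (V := W) m) ∘ₗ (LinearMap.restrictScalars A φ) := by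
  ext v
  show φ (MonoidAlgebra.of A M m • v) = MonoidAlgebra.of A M m • φ v
  exact map_smul φ _ v

lemma baseChange_equivariant (φ : V →ₗ[MonoidAlgebra A M] W)
    (s : MonoidAlgebra B M) (x : B ⊗[A] V) :
    LinearMap.baseChange B (LinearMap.restrictScalars A φ) (s • x)
      = s • (LinearMap.baseChange B (LinearMap.restrictScalars A φ) x) := by
  rw [bc_smul_def, bc_smul_def]
  induction s using MonoidAlgebra.induction_on with
  | of m =>
      rw [MonoidAlgebra.lift_of, MonoidAlgebra.lift_of]
      show (LinearMap.baseChange B (LinearMap.restrictScalars A φ) ∘ₗ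
        LinearMap.baseChange B (mAct (A := A) (V := V) m)) x
        = (LinearMap.baseChange B (mAct (A := A) (V := W) m) ∘ₗ
          LinearMap.baseChange B (LinearMap.restrictScalars A φ)) x
      rw [← LinearMap.baseChange_comp, ← LinearMap.baseChange_comp, restrict_comm]
  | add f g hf hg =>
      rw [map_add, map_add, LinearMap.add_apply, LinearMap.add_apply, map_add, hf, hg]
  | smul r f hf =>
      rw [map_smul, map_smul, LinearMap.smul_apply, LinearMap.smul_apply, map_smul, hf]

/-- `φ ⊗ b` induces a `B[M]`-linear map `V ⊗_A B → W ⊗_A B`, determined by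
`v ⊗ b' ↦ φ(v) ⊗ b·b'`. -/
noncomputable def pairMap (φ : V →ₗ[MonoidAlgebra A M] W) (b : B) :
    (B ⊗[A] V) →ₗ[MonoidAlgebra B M] (B ⊗[A] W) where
  toFun x := b • (LinearMap.baseChange B (LinearMap.restrictScalars A φ) x)
  map_add' x y := by
    show b • _ = b • _ + b • _
    rw [map_add, smul_add]
  map_smul' s x := by
    simp only [RingHom.id_apply]
    rw [baseChange_equivariant, bc_smul_def, bc_smul_def, map_smul]

lemma pairMap_apply (φ : V →ₗ[MonoidAlgebra A M] W) (b : B) (x : B ⊗[A] V) :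
    pairMap φ b x = b • (LinearMap.baseChange B (LinearMap.restrictScalars A φ) x) := rfl

/-- The natural map `Hom_{A[M]}(V, W) ⊗_A B → Hom_{B[M]}(V ⊗_A B, W ⊗_A B)` sending
`φ ⊗ b` to the `B[M]`-linear map determined by `v ⊗ b' ↦ φ(v) ⊗ b·b'`. -/
noncomputable def natBaseChangeHom :
    ((V →ₗ[MonoidAlgebra A M] W) ⊗[A] B) →+
      ((B ⊗[A] V) →ₗ[MonoidAlgebra B M] (B ⊗[A] W)) :=
  TensorProduct.liftAddHom
    { toFun := fun φ =>
        { toFun := fun b => pairMap φ b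
          map_zero' := LinearMap.ext fun x => by
            rw [pairMap_apply, zero_smul]; rfl
          map_add' := fun b b' => LinearMap.ext fun x => by
            rw [pairMap_apply, add_smul]; rfl }
      map_zero' := AddMonoidHom.ext fun b => LinearMap.ext fun x => by
        show pairMap 0 b x = 0
        rw [pairMap_apply, LinearMap.restrictScalars_zero]
        simp
      map_add' := fun φ ψ => AddMonoidHom.ext fun b => LinearMap.ext fun x => by
        show pairMap (φ + ψ) b x = pairMap φ b x + pairMap ψ b x
        rw [pairMap_apply, pairMap_apply, pairMap_apply,
          LinearMap.restrictScalars_add, LinearMap.baseChange_add]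
        rw [LinearMap.add_apply, smul_add] }
    (fun a φ b => LinearMap.ext fun x => by
      show pairMap (a • φ) b x = pairMap φ (a • b) x
      rw [pairMap_apply, pairMap_apply, LinearMap.restrictScalars_smul,
        LinearMap.baseChange_smul, LinearMap.smul_apply, smul_comm b a, smul_assoc])

section AuxBC

variable {ι : Type*} [DecidableEq ι]

/-- Base-change along a free module, identified with a finsupp. -/
noncomputable def auxEE (e : Module.Basis ι A B) (W' : Type*) [AddCommGroup W'] [Module A W'] :
    (B ⊗[A] W') ≃ₗ[A] (ι →₀ W') :=
  (TensorProduct.congr e.repr (LinearEquiv.refl A W')).trans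
    (TensorProduct.finsuppScalarLeft A W' ι)

lemma auxEE_tmul_apply (e : Module.Basis ι A B) {W' : Type*} [AddCommGroup W'] [Module A W']
    (b : B) (w : W') (i : ι) : auxEE e W' (b ⊗ₜ[A] w) i = e.repr b i • w := by
  simp [auxEE, TensorProduct.finsuppScalarLeft_apply_tmul_apply]

lemma auxEE_basis_tmul (e : Module.Basis ι A B) {W' : Type*} [AddCommGroup W'] [Module A W']
    (i : ι) (w : W') : auxEE e W' (e i ⊗ₜ[A] w) = Finsupp.single i w := by
  ext j
  rw [auxEE_tmul_apply, Module.Basis.repr_self]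
  by_cases h : i = j <;> simp [Finsupp.single_apply, h]

lemma auxEE_baseChange_apply (e : Module.Basis ι A B) {V' W' : Type*}
    [AddCommGroup V'] [Module A V'] [AddCommGroup W'] [Module A W']
    (f : V' →ₗ[A] W') (x : B ⊗[A] V') (i : ι) :
    auxEE e W' (f.baseChange B x) i = f (auxEE e V' x i) := by
  induction x using TensorProduct.induction_on with
  | zero => simp
  | tmul b v => rw [LinearMap.baseChange_tmul, auxEE_tmul_apply, auxEE_tmul_apply, map_smul]
  | add x y hx hy => simp only [map_add, Finsupp.add_apply, hx, hy]

lemma aux_of_smul {U : Type*} [AddCommGroup U] [Module A U]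
    [Module (MonoidAlgebra A M) U] [IsScalarTower A (MonoidAlgebra A M) U]
    (m : M) (x : B ⊗[A] U) :
    (MonoidAlgebra.of B M m) • x = (mAct (A := A) (V := U) m).baseChange B x := by
  rw [bc_smul_def, MonoidAlgebra.lift_of]; rfl

lemma aux_single_one_smul {U : Type*} [AddCommGroup U] [Module A U]
    [Module (MonoidAlgebra A M) U] [IsScalarTower A (MonoidAlgebra A M) U]
    (b : B) (x : B ⊗[A] U) :
    (MonoidAlgebra.single (1 : M) b : MonoidAlgebra B M) • x = b • x := by
  rw [bc_smul_def]
  have h : (MonoidAlgebra.single (1 : M) b : MonoidAlgebra B M)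
      = b • (1 : MonoidAlgebra B M) := by
    simp [MonoidAlgebra.one_def, MonoidAlgebra.smul_single']
  rw [h, map_smul, map_one]
  rfl

lemma aux_bsmul_smul {U : Type*} [AddCommGroup U] [Module A U]
    [Module (MonoidAlgebra A M) U] [IsScalarTower A (MonoidAlgebra A M) U]
    (b : B) (s : MonoidAlgebra B M) (x : B ⊗[A] U) :
    (b • s) • x = b • (s • x) := by
  rw [bc_smul_def, bc_smul_def, map_smul]
  rfl

lemma aux_asmul_smul {U : Type*} [AddCommGroup U] [Module A U]
    [Module (MonoidAlgebra A M) U] [IsScalarTower A (MonoidAlgebra A M) U]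
    (a : A) (s : MonoidAlgebra B M) (x : B ⊗[A] U) :
    (a • s) • x = a • (s • x) := by
  rw [← algebraMap_smul B a s, aux_bsmul_smul, algebraMap_smul]

/-- The canonical `A`-algebra map `A[M] → B[M]`. -/
noncomputable def auxIota : MonoidAlgebra A M →ₐ[A] MonoidAlgebra B M :=
  MonoidAlgebra.lift A (MonoidAlgebra B M) M (MonoidAlgebra.of B M)

lemma auxK1 {U : Type*} [AddCommGroup U] [Module A U]
    [Module (MonoidAlgebra A M) U] [IsScalarTower A (MonoidAlgebra A M) U]
    (r : MonoidAlgebra A M) (v : U) :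
    (1 : B) ⊗ₜ[A] (r • v)
      = (auxIota (A := A) (M := M) (B := B) r) • ((1 : B) ⊗ₜ[A] v) := by
  induction r using MonoidAlgebra.induction_on with
  | of m =>
      rw [auxIota, MonoidAlgebra.lift_of, aux_of_smul, LinearMap.baseChange_tmul]
      rfl
  | add f g hf hg => rw [map_add, add_smul, add_smul, TensorProduct.tmul_add, hf, hg]
  | smul a f hf =>
      rw [map_smul, smul_assoc, TensorProduct.tmul_smul, hf, aux_asmul_smul]

lemma auxK2 (e : Module.Basis ι A B) {U : Type*} [AddCommGroup U] [Module A U]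
    [Module (MonoidAlgebra A M) U] [IsScalarTower A (MonoidAlgebra A M) U]
    (r : MonoidAlgebra A M) (y : B ⊗[A] U) (i : ι) :
    auxEE e U ((auxIota (A := A) (M := M) (B := B) r) • y) i = r • (auxEE e U y i) := by
  induction r using MonoidAlgebra.induction_on with
  | of m =>
      rw [auxIota, MonoidAlgebra.lift_of, aux_of_smul, auxEE_baseChange_apply]
      rfl
  | add f g hf hg =>
      rw [map_add, add_smul, map_add, Finsupp.add_apply, hf, hg, add_smul]
  | smul a f hf =>
      have h1 : auxIota (A := A) (M := M) (B := B) (a • f)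
          = a • auxIota (A := A) (M := M) (B := B) f :=
        map_smul (auxIota (A := A) (M := M) (B := B)).toLinearMap a f
      rw [h1, aux_asmul_smul, LinearEquiv.map_smul, Finsupp.smul_apply, hf, smul_assoc]

variable {W : Type*} [AddCommGroup W] [Module A W] [Module (MonoidAlgebra A M) W]
  [IsScalarTower A (MonoidAlgebra A M) W]

lemma aux_ext (G G' : (B ⊗[A] V) →ₗ[MonoidAlgebra B M] (B ⊗[A] W))
    (h : ∀ v : V, G ((1 : B) ⊗ₜ[A] v) = G' ((1 : B) ⊗ₜ[A] v)) : G = G' := by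
  apply LinearMap.ext
  intro x
  induction x using TensorProduct.induction_on with
  | zero => simp
  | tmul b v =>
      have hb : b ⊗ₜ[A] v
          = (MonoidAlgebra.single (1 : M) b : MonoidAlgebra B M) • ((1 : B) ⊗ₜ[A] v) := by
        rw [aux_single_one_smul, TensorProduct.smul_tmul', smul_eq_mul, mul_one]
      rw [hb, map_smul, map_smul, h]
  | add x y hx hy => rw [map_add, map_add, hx, hy]

/-- The identification of `Hom ⊗ B` with a finsupp via a basis of `B`. -/
noncomputable def auxTheta (e : Module.Basis ι A B) :
    ((V →ₗ[MonoidAlgebra A M] W) ⊗[A] B) ≃ₗ[A] (ι →₀ (V →ₗ[MonoidAlgebra A M] W)) :=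
  (TensorProduct.congr (LinearEquiv.refl A (V →ₗ[MonoidAlgebra A M] W)) e.repr).trans
    (TensorProduct.finsuppScalarRight A A (V →ₗ[MonoidAlgebra A M] W) ι)

lemma aux_claim (e : Module.Basis ι A B) (x : (V →ₗ[MonoidAlgebra A M] W) ⊗[A] B)
    (v : V) (i : ι) :
    auxEE e W ((natBaseChangeHom (A := A) (M := M) (B := B) (V := V) (W := W) x)
        ((1 : B) ⊗ₜ[A] v)) i
      = ((auxTheta (V := V) (W := W) e) x i) v := by
  induction x using TensorProduct.induction_on with
  | zero => simp
  | tmul φ b =>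
      have h1 : natBaseChangeHom (A := A) (M := M) (B := B) (V := V) (W := W) (φ ⊗ₜ[A] b)
          = pairMap φ b := TensorProduct.liftAddHom_tmul _ _ _ _
      rw [h1]
      have h2 : pairMap φ b ((1 : B) ⊗ₜ[A] v) = b ⊗ₜ[A] (φ v) := by
        rw [pairMap_apply, LinearMap.baseChange_tmul, TensorProduct.smul_tmul',
          smul_eq_mul, mul_one]
        rfl
      rw [h2, auxEE_tmul_apply]
      have h3 : (auxTheta (V := V) (W := W) e) (φ ⊗ₜ[A] b) i = e.repr b i • φ := by
        simp [auxTheta, TensorProduct.finsuppScalarRight_apply_tmul_apply]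
      rw [h3, LinearMap.smul_apply]
  | add x y hx hy =>
      rw [map_add, LinearMap.add_apply, map_add, Finsupp.add_apply, map_add,
        Finsupp.add_apply, LinearMap.add_apply, hx, hy]

end AuxBC

/-- The finitely generated case of Proposition 2.5: if `B` is an `A`-algebra that is
free as an `A`-module and `V` is a finitely generated `A[M]`-module, then the natural
map `Hom_{A[M]}(V, W) ⊗_A B → Hom_{B[M]}(V ⊗_A B, W ⊗_A B)`, sending `φ ⊗ b` to the
`B[M]`-linear map determined by `v ⊗ b' ↦ φ(v) ⊗ b·b'`, is bijective. -/
theorem natBaseChangeHom_bijective_of_finite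
    [Module.Free A B] [Module.Finite (MonoidAlgebra A M) V] :
    Function.Bijective
      ⇑(natBaseChangeHom (A := A) (M := M) (B := B) (V := V) (W := W)) := by
  classical
  set ι := Module.Free.ChooseBasisIndex A B with hι
  set e : Module.Basis ι A B := Module.Free.chooseBasis A B with he
  constructor
  · -- injectivity
    rw [injective_iff_map_eq_zero]
    intro x hx
    have h0 : auxTheta (V := V) (W := W) e x = 0 := by
      ext i v
      rw [← aux_claim e x v i, hx]
      simp
    have := congrArg (auxTheta (V := V) (W := W) e).symm h0
    simpa using this
  · -- surjectivity
    intro F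
    obtain ⟨S, hS⟩ := Module.Finite.fg_top (R := MonoidAlgebra A M) (M := V)
    let φ : ι → (V →ₗ[MonoidAlgebra A M] W) := fun i =>
      { toFun := fun v => auxEE e W (F ((1 : B) ⊗ₜ[A] v)) i
        map_add' := fun v w => by
          rw [TensorProduct.tmul_add, map_add, map_add, Finsupp.add_apply]
        map_smul' := fun r v => by
          rw [RingHom.id_apply, auxK1, map_smul, auxK2] }
    have hφ : ∀ (i : ι) (v : V), φ i v = auxEE e W (F ((1 : B) ⊗ₜ[A] v)) i := fun _ _ => rfl
    let T : Finset ι := S.sup fun v => (auxEE e W (F ((1 : B) ⊗ₜ[A] v))).support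
    have hφT : ∀ i, i ∉ T → φ i = 0 := by
      intro i hi
      apply LinearMap.ext
      intro v
      have hv : v ∈ Submodule.span (MonoidAlgebra A M) (S : Set V) := by
        rw [hS]; exact Submodule.mem_top
      induction hv using Submodule.span_induction with
      | mem w hw =>
          have hsub : (auxEE e W (F ((1 : B) ⊗ₜ[A] w))).support ⊆ T :=
            Finset.le_sup (f := fun v => (auxEE e W (F ((1 : B) ⊗ₜ[A] v))).support) hw
          have : i ∉ (auxEE e W (F ((1 : B) ⊗ₜ[A] w))).support := fun h => hi (hsub h)
          rw [hφ, Finsupp.notMem_support_iff.mp this, LinearMap.zero_apply]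
      | zero => simp
      | add x y hx hy ihx ihy => rw [map_add, ihx, ihy]; simp
      | smul r x hx ihx => rw [map_smul, ihx]; simp
    refine ⟨∑ i ∈ T, (φ i) ⊗ₜ[A] (e i), ?_⟩
    rw [map_sum]
    refine aux_ext _ _ fun v => ?_
    rw [LinearMap.sum_apply]
    have hterm : ∀ i : ι,
        (natBaseChangeHom (A := A) (M := M) (B := B) (V := V) (W := W)
          ((φ i) ⊗ₜ[A] (e i))) ((1 : B) ⊗ₜ[A] v) = (e i) ⊗ₜ[A] (φ i v) := by
      intro i
      have h1 : natBaseChangeHom (A := A) (M := M) (B := B) (V := V) (W := W)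
          ((φ i) ⊗ₜ[A] (e i)) = pairMap (φ i) (e i) := TensorProduct.liftAddHom_tmul _ _ _ _
      rw [h1, pairMap_apply, LinearMap.baseChange_tmul, TensorProduct.smul_tmul',
        smul_eq_mul, mul_one]
      rfl
    simp only [hterm]
    apply (auxEE e W).injective
    rw [map_sum]
    simp only [auxEE_basis_tmul]
    set g : ι →₀ W := auxEE e W (F ((1 : B) ⊗ₜ[A] v)) with hg
    have hsub : g.support ⊆ T := by
      intro i hi
      by_contra hiT
      have : φ i v = 0 := by rw [hφT i hiT]; rfl
      rw [hφ, ← hg] at this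
      exact Finsupp.mem_support_iff.mp hi this
    have hsum : ∑ i ∈ T, Finsupp.single i (φ i v) = ∑ i ∈ T, Finsupp.single i (g i) := by
      refine Finset.sum_congr rfl fun i _ => ?_
      rw [hφ, ← hg]
    have hsum2 : ∑ i ∈ T, Finsupp.single i (g i) = ∑ i ∈ g.support, Finsupp.single i (g i) :=
      (Finset.sum_subset hsub fun i _ hi => by
        rw [Finsupp.notMem_support_iff.mp hi, Finsupp.single_zero]).symm
    rw [hsum, hsum2, ← Finsupp.sum, Finsupp.sum_single]

end
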